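/- Let a ∈ C¹([-1,1]) be positive on (-1,1) and vanish at ±1, with ∫₀ˣ ds/a(s) defining a function A ∈ L¹(-1,1). Then the embedding of the weighted Sobolev space H¹_a(-1,1) into L²(-1,1) is compact: every bounded sequence in H¹_a(-1,1) has a subsequence converging strongly in L²(-1,1). -/

import Mathlib

open MeasureTheory Set Real Filter Topology

set_option maxHeartbeats 2000000

lemma my_cauchy_schwarz {α : Type*} [MeasurableSpace α] {μ : Measure α} {f g : α → ℝ}
    (hf : Integrable (fun x => f x ^ 2) μ) (hg : Integrable (fun x => g x ^ 2) μ)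
    (hfg : Integrable (fun x => f x * g x) μ) :
    (∫ x, f x * g x ∂μ) ^ 2 ≤ (∫ x, f x ^ 2 ∂μ) * (∫ x, g x ^ 2 ∂μ) := by
  set F := ∫ x, f x ^ 2 ∂μ with hF
  set G := ∫ x, g x ^ 2 ∂μ with hG
  set I := ∫ x, f x * g x ∂μ with hI
  have key : ∀ t : ℝ, 0 ≤ F * (t * t) + (2 * I) * t + G := by
    intro t
    have h1 : Integrable (fun x => (t * t) * f x ^ 2) μ := hf.const_mul _
    have h2 : Integrable (fun x => (2 * t) * (f x * g x) + g x ^ 2) μ :=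
      (hfg.const_mul _).add hg
    have h3 : Integrable (fun x => (2 * t) * (f x * g x)) μ := hfg.const_mul _
    have h0 : 0 ≤ ∫ x, (t * f x + g x) ^ 2 ∂μ := integral_nonneg fun x => sq_nonneg _
    have hexp : (fun x => (t * f x + g x) ^ 2)
        = fun x => (t * t) * f x ^ 2 + ((2 * t) * (f x * g x) + g x ^ 2) := by
      funext x; ring
    rw [hexp, integral_add h1 h2, integral_add h3 hg, integral_const_mul, integral_const_mul] at h0
    linarith
  have := discrim_le_zero key
  rw [discrim] at this
  nlinarith

/-- Compactness of the embedding H¹_a(-1,1) ↪ L²(-1,1): every bounded sequence in the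
    weighted Sobolev space has a subsequence converging strongly in L²(-1,1). -/
theorem compact_embedding_weighted_sobolev
    (a : ℝ → ℝ) (ha : ContDiffOn ℝ 1 a (Icc (-1) 1))
    (hapos : ∀ x ∈ Ioo (-1:ℝ) 1, 0 < a x)
    (ha1 : a (-1) = 0) (ha2 : a 1 = 0)
    (hAint : IntegrableOn (fun x => ∫ s in (0:ℝ)..x, 1 / a s) (Ioo (-1) 1))
    (R : ℝ) (hR : 0 < R)
    (u u' : ℕ → ℝ → ℝ)
    (hu : ∀ n, ∀ x ∈ Ioo (-1:ℝ) 1, HasDerivAt (u n) (u' n x) x)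
    (huL2 : ∀ n, MemLp (u n) 2 (volume.restrict (Ioo (-1) 1)))
    (huL2' : ∀ n, MemLp (fun x => Real.sqrt (a x) * u' n x) 2 (volume.restrict (Ioo (-1) 1)))
    (hbdd : ∀ n, (∫ x in Ioo (-1:ℝ) 1, u n x ^ 2) +
                 (∫ x in Ioo (-1:ℝ) 1, a x * u' n x ^ 2) ≤ R ^ 2) :
    ∃ φ : ℕ → ℕ, StrictMono φ ∧ ∃ v : ℝ → ℝ,
      MemLp v 2 (volume.restrict (Ioo (-1) 1)) ∧
      Tendsto (fun n => ∫ x in Ioo (-1:ℝ) 1, (u (φ n) x - v x) ^ 2) atTop (nhds 0) := by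
  set A : ℝ → ℝ := fun x => ∫ s in (0:ℝ)..x, 1 / a s with hAdef
  have hIooO : OrdConnected (Ioo (-1:ℝ) 1) := ordConnected_Ioo
  have hacont : ContinuousOn a (Icc (-1:ℝ) 1) := ha.continuousOn
  have hIooIcc : Ioo (-1:ℝ) 1 ⊆ Icc (-1) 1 := Ioo_subset_Icc_self
  have hrec_cont : ∀ x y : ℝ, x ∈ Ioo (-1:ℝ) 1 → y ∈ Ioo (-1:ℝ) 1 →
      ContinuousOn (fun s => 1 / a s) (uIcc x y) := by
    intro x y hx hy
    have hsub : uIcc x y ⊆ Ioo (-1:ℝ) 1 := hIooO.uIcc_subset hx hy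
    exact continuousOn_const.div (hacont.mono (hsub.trans hIooIcc))
      (fun t ht => (hapos t (hsub ht)).ne')
  have hrec_int : ∀ x y : ℝ, x ∈ Ioo (-1:ℝ) 1 → y ∈ Ioo (-1:ℝ) 1 →
      IntervalIntegrable (fun s => 1 / a s) volume x y :=
    fun x y hx hy => (hrec_cont x y hx hy).intervalIntegrable
  have h0mem : (0:ℝ) ∈ Ioo (-1:ℝ) 1 := by norm_num
  have hAdiff : ∀ x y : ℝ, x ∈ Ioo (-1:ℝ) 1 → y ∈ Ioo (-1:ℝ) 1 →
      A y - A x = ∫ s in x..y, 1 / a s := by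
    intro x y hx hy
    exact intervalIntegral.integral_interval_sub_left (hrec_int 0 y h0mem hy)
      (hrec_int 0 x h0mem hx)
  have hAmono : ∀ x y : ℝ, x ∈ Ioo (-1:ℝ) 1 → y ∈ Ioo (-1:ℝ) 1 → x ≤ y → A x ≤ A y := by
    intro x y hx hy hxy
    have hIccsub : Icc x y ⊆ Ioo (-1:ℝ) 1 := hIooO.out hx hy
    have h1 : 0 ≤ ∫ s in x..y, 1 / a s :=
      intervalIntegral.integral_nonneg hxy fun t ht =>
        one_div_nonneg.2 (hapos t (hIccsub ht)).le
    have := hAdiff x y hx hy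
    linarith
  -- measurability of u'
  have hu'meas : ∀ n, AEStronglyMeasurable (u' n) (volume.restrict (Ioo (-1:ℝ) 1)) := by
    intro n
    have hh : ∀ᵐ x ∂(volume.restrict (Ioo (-1:ℝ) 1)), deriv (u n) x = u' n x := by
      filter_upwards [ae_restrict_mem measurableSet_Ioo] with x hx
      exact (hu n x hx).deriv
    exact ((measurable_deriv (u n)).aestronglyMeasurable).congr hh
  -- integrability of a * u'^2 and u^2
  have hau2_int : ∀ n, IntegrableOn (fun x => a x * u' n x ^ 2) (Ioo (-1:ℝ) 1) := by
    intro n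
    have h1 : Integrable (fun x => (Real.sqrt (a x) * u' n x) ^ 2)
        (volume.restrict (Ioo (-1:ℝ) 1)) :=
      (memLp_two_iff_integrable_sq (huL2' n).aestronglyMeasurable).1 (huL2' n)
    refine h1.congr ?_
    filter_upwards [ae_restrict_mem measurableSet_Ioo] with x hx
    rw [mul_pow, Real.sq_sqrt (hapos x hx).le]
  have hu2_int : ∀ n, IntegrableOn (fun x => u n x ^ 2) (Ioo (-1:ℝ) 1) := fun n =>
    (memLp_two_iff_integrable_sq (huL2 n).aestronglyMeasurable).1 (huL2 n)
  -- bounds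
  have hInonneg : ∀ n, 0 ≤ ∫ x in Ioo (-1:ℝ) 1, u n x ^ 2 :=
    fun n => setIntegral_nonneg measurableSet_Ioo fun x _ => sq_nonneg _
  have hJnonneg : ∀ n, 0 ≤ ∫ x in Ioo (-1:ℝ) 1, a x * u' n x ^ 2 :=
    fun n => setIntegral_nonneg measurableSet_Ioo fun x hx =>
      mul_nonneg (hapos x hx).le (sq_nonneg _)
  have hIbd : ∀ n, (∫ x in Ioo (-1:ℝ) 1, u n x ^ 2) ≤ R ^ 2 :=
    fun n => by linarith [hbdd n, hJnonneg n]
  have hJbd : ∀ n, (∫ x in Ioo (-1:ℝ) 1, a x * u' n x ^ 2) ≤ R ^ 2 :=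
    fun n => by linarith [hbdd n, hInonneg n]
  -- KEY Hölder-type estimate
  have hkey : ∀ n x y, x ∈ Ioo (-1:ℝ) 1 → y ∈ Ioo (-1:ℝ) 1 → x ≤ y →
      (u n y - u n x) ^ 2 ≤ R ^ 2 * (A y - A x) := by
    intro n x y hx hy hxy
    have hIccsub : Icc x y ⊆ Ioo (-1:ℝ) 1 := hIooO.out hx hy
    have hIocsub : Ioc x y ⊆ Ioo (-1:ℝ) 1 := Ioc_subset_Icc_self.trans hIccsub
    obtain ⟨t0, ht0mem, ht0min⟩ := isCompact_Icc.exists_isMinOn (nonempty_Icc.2 hxy)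
      (hacont.mono (hIccsub.trans hIooIcc))
    have hcpos : 0 < a t0 := hapos t0 (hIccsub ht0mem)
    have hu'measK : AEStronglyMeasurable (u' n) (volume.restrict (Icc x y)) :=
      (hu'meas n).mono_measure (Measure.restrict_mono hIccsub le_rfl)
    have hau2K : IntegrableOn (fun t => a t * u' n t ^ 2) (Icc x y) :=
      (hau2_int n).mono_set hIccsub
    have hu'2K : IntegrableOn (fun t => u' n t ^ 2) (Icc x y) := by
      refine Integrable.mono' (hau2K.const_mul (a t0)⁻¹) (hu'measK.pow 2) ?_
      filter_upwards [ae_restrict_mem measurableSet_Icc] with t ht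
      have hca : a t0 ≤ a t := ht0min ht
      rw [Real.norm_eq_abs, abs_of_nonneg (sq_nonneg _)]
      have h1 : a t0 * u' n t ^ 2 ≤ a t * u' n t ^ 2 :=
        mul_le_mul_of_nonneg_right hca (sq_nonneg _)
      have h2 : (a t0)⁻¹ * (a t0 * u' n t ^ 2) = u' n t ^ 2 := by
        field_simp
      calc u' n t ^ 2 = (a t0)⁻¹ * (a t0 * u' n t ^ 2) := h2.symm
        _ ≤ (a t0)⁻¹ * (a t * u' n t ^ 2) :=
            mul_le_mul_of_nonneg_left h1 (inv_nonneg.2 hcpos.le)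
    have hu'K : IntegrableOn (u' n) (Icc x y) := by
      have hconst : IntegrableOn (fun _ : ℝ => (1:ℝ)) (Icc x y) :=
        integrableOn_const measure_Icc_lt_top.ne
      have hsum : IntegrableOn (fun t => 1 + u' n t ^ 2) (Icc x y) := hconst.add hu'2K
      refine Integrable.mono' hsum hu'measK ?_
      refine Eventually.of_forall fun t => ?_
      rw [Real.norm_eq_abs]
      nlinarith [sq_nonneg (|u' n t| - 1), sq_abs (u' n t), abs_nonneg (u' n t)]
    -- FTC
    have hintI : IntervalIntegrable (u' n) volume x y := by
      have h : IntegrableOn (u' n) (Set.uIcc x y) := by rwa [uIcc_of_le hxy]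
      exact h.intervalIntegrable
    have hftc : u n y - u n x = ∫ t in x..y, u' n t := by
      refine (intervalIntegral.integral_eq_sub_of_hasDerivAt ?_ hintI).symm
      intro t ht
      rw [uIcc_of_le hxy] at ht
      exact hu n t (hIccsub ht)
    rw [hftc, intervalIntegral.integral_of_le hxy]
    -- Cauchy-Schwarz on Ioc x y
    set μ := volume.restrict (Ioc x y) with hμ
    have hmemIoc : ∀ᵐ t ∂μ, t ∈ Ioc x y := ae_restrict_mem measurableSet_Ioc
    have hsq : ∀ t ∈ Ioc x y,
        u' n t = (Real.sqrt (a t) * u' n t) * (1 / Real.sqrt (a t)) := by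
      intro t ht
      have h3 : 0 < Real.sqrt (a t) := Real.sqrt_pos.2 (hapos t (hIocsub ht))
      field_simp
    have hf2 : Integrable (fun t => (Real.sqrt (a t) * u' n t) ^ 2) μ := by
      refine ((hau2_int n).mono_set hIocsub).congr ?_
      filter_upwards [hmemIoc] with t ht
      rw [mul_pow, Real.sq_sqrt (hapos t (hIocsub ht)).le]
    have hg2 : Integrable (fun t => (1 / Real.sqrt (a t)) ^ 2) μ := by
      have hint : IntegrableOn (fun s => 1 / a s) (Ioc x y) := by
        have h := (hrec_int x y hx hy).1
        exact h
      refine hint.congr ?_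
      filter_upwards [hmemIoc] with t ht
      rw [div_pow, one_pow, Real.sq_sqrt (hapos t (hIocsub ht)).le]
    have hfg : Integrable (fun t => (Real.sqrt (a t) * u' n t) * (1 / Real.sqrt (a t))) μ := by
      refine (hu'K.mono_set Ioc_subset_Icc_self).congr ?_
      filter_upwards [hmemIoc] with t ht
      exact hsq t ht
    have hCS := my_cauchy_schwarz hf2 hg2 hfg
    have heq1 : ∫ t in Ioc x y, u' n t =
        ∫ t, (Real.sqrt (a t) * u' n t) * (1 / Real.sqrt (a t)) ∂μ := by
      refine setIntegral_congr_fun measurableSet_Ioc ?_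
      intro t ht; exact hsq t ht
    have heq2 : (∫ t, (Real.sqrt (a t) * u' n t) ^ 2 ∂μ) ≤ R ^ 2 := by
      have e : (∫ t, (Real.sqrt (a t) * u' n t) ^ 2 ∂μ)
          = ∫ t in Ioc x y, a t * u' n t ^ 2 := by
        refine setIntegral_congr_fun measurableSet_Ioc ?_
        intro t ht
        show (Real.sqrt (a t) * u' n t) ^ 2 = a t * u' n t ^ 2
        rw [mul_pow, Real.sq_sqrt (hapos t (hIocsub ht)).le]
      rw [e]
      refine le_trans (setIntegral_mono_set (hau2_int n) ?_ hIocsub.eventuallyLE) (hJbd n)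
      filter_upwards [ae_restrict_mem measurableSet_Ioo] with t ht
      exact mul_nonneg (hapos t ht).le (sq_nonneg _)
    have heq3 : (∫ t, (1 / Real.sqrt (a t)) ^ 2 ∂μ) = A y - A x := by
      have e : (∫ t, (1 / Real.sqrt (a t)) ^ 2 ∂μ) = ∫ t in Ioc x y, 1 / a t := by
        refine setIntegral_congr_fun measurableSet_Ioc ?_
        intro t ht
        show (1 / Real.sqrt (a t)) ^ 2 = 1 / a t
        rw [div_pow, one_pow, Real.sq_sqrt (hapos t (hIocsub ht)).le]
      rw [e, hAdiff x y hx hy, intervalIntegral.integral_of_le hxy]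
    have hg2nonneg : 0 ≤ ∫ t, (1 / Real.sqrt (a t)) ^ 2 ∂μ :=
      integral_nonneg fun t => sq_nonneg _
    calc (∫ t in Ioc x y, u' n t) ^ 2
        = (∫ t, (Real.sqrt (a t) * u' n t) * (1 / Real.sqrt (a t)) ∂μ) ^ 2 := by rw [heq1]
      _ ≤ (∫ t, (Real.sqrt (a t) * u' n t) ^ 2 ∂μ)
            * (∫ t, (1 / Real.sqrt (a t)) ^ 2 ∂μ) := hCS
      _ ≤ R ^ 2 * (∫ t, (1 / Real.sqrt (a t)) ^ 2 ∂μ) :=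
          mul_le_mul_of_nonneg_right heq2 hg2nonneg
      _ = R ^ 2 * (A y - A x) := by rw [heq3]
  -- a point in the middle with controlled value
  have hsub2 : Ioo (-(1:ℝ)/2) (1/2) ⊆ Ioo (-1:ℝ) 1 :=
    Ioo_subset_Ioo (by norm_num) (by norm_num)
  have hmid : ∀ n, ∃ y ∈ Ioo (-(1:ℝ)/2) (1/2), u n y ^ 2 ≤ 2 * R ^ 2 := by
    intro n
    by_contra hcon
    push_neg at hcon
    have hfi : IntegrableOn (fun x => u n x ^ 2) (Ioo (-(1:ℝ)/2) (1/2)) :=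
      (hu2_int n).mono_set hsub2
    have h1 := setIntegral_ge_of_const_le (measurableSet_Ioo
      (a := -(1:ℝ)/2) (b := (1:ℝ)/2)) measure_Ioo_lt_top.ne
      (fun y hy => (hcon y hy).le) hfi
    have hvol : volume.real (Ioo (-(1:ℝ)/2) ((1:ℝ)/2)) = 1 := by
      rw [measureReal_def, Real.volume_Ioo]
      norm_num
    rw [hvol, one_smul] at h1
    have h2 : (∫ x in Ioo (-(1:ℝ)/2) ((1:ℝ)/2), u n x ^ 2)
        ≤ ∫ x in Ioo (-1:ℝ) 1, u n x ^ 2 := by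
      refine setIntegral_mono_set (hu2_int n) ?_ hsub2.eventuallyLE
      exact Eventually.of_forall fun x => sq_nonneg _
    have := hIbd n
    nlinarith [pow_pos hR 2]
  -- constants
  have hhalf1 : (-(1:ℝ)/2) ∈ Ioo (-1:ℝ) 1 := by norm_num
  have hhalf2 : ((1:ℝ)/2) ∈ Ioo (-1:ℝ) 1 := by norm_num
  set C0 : ℝ := |A (-(1:ℝ)/2)| + |A ((1:ℝ)/2)| with hC0
  have hAbound : ∀ y ∈ Icc (-(1:ℝ)/2) ((1:ℝ)/2), |A y| ≤ C0 := by
    intro y hy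
    have hymem : y ∈ Ioo (-1:ℝ) 1 := (hIooO.out hhalf1 hhalf2) hy
    have h1 : A (-(1:ℝ)/2) ≤ A y := hAmono _ _ hhalf1 hymem hy.1
    have h2 : A y ≤ A ((1:ℝ)/2) := hAmono _ _ hymem hhalf2 hy.2
    rw [abs_le]
    constructor
    · have h3 := neg_abs_le (A (-(1:ℝ)/2))
      have h4 := abs_nonneg (A ((1:ℝ)/2))
      rw [hC0]; linarith
    · have h3 := le_abs_self (A ((1:ℝ)/2))
      have h4 := abs_nonneg (A (-(1:ℝ)/2))
      rw [hC0]; linarith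
  -- dominating function
  set G : ℝ → ℝ := fun x => 4*R^2 + 2*R^2*C0 + 2*R^2*|A x| with hGdef
  have hGint : IntegrableOn G (Ioo (-1:ℝ) 1) := by
    have h1 : IntegrableOn (fun _ : ℝ => 4*R^2 + 2*R^2*C0) (Ioo (-1:ℝ) 1) :=
      integrableOn_const measure_Ioo_lt_top.ne
    exact h1.add ((hAint.abs).const_mul _)
  -- uniform pointwise bound
  have hpt : ∀ n, ∀ x ∈ Ioo (-1:ℝ) 1, u n x ^ 2 ≤ G x := by
    intro n x hx
    obtain ⟨y, hy, hy2⟩ := hmid n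
    have hyIoo : y ∈ Ioo (-1:ℝ) 1 := hsub2 hy
    have hyIcc : y ∈ Icc (-(1:ℝ)/2) ((1:ℝ)/2) := Ioo_subset_Icc_self hy
    have hAy' := abs_le.1 (hAbound y hyIcc)
    have hdsq : (u n x - u n y) ^ 2 ≤ R ^ 2 * (|A x| + C0) := by
      rcases le_total x y with h | h
      · have hk := hkey n x y hx hyIoo h
        have he : (u n x - u n y) ^ 2 = (u n y - u n x) ^ 2 := by ring
        rw [he]
        refine hk.trans (mul_le_mul_of_nonneg_left ?_ (sq_nonneg R))
        have h5 := neg_abs_le (A x)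
        linarith
      · have hk := hkey n y x hyIoo hx h
        refine hk.trans (mul_le_mul_of_nonneg_left ?_ (sq_nonneg R))
        have h6 := le_abs_self (A x)
        linarith
    have hsq2 : u n x ^ 2 ≤ 2 * u n y ^ 2 + 2 * (u n x - u n y) ^ 2 := by
      nlinarith [sq_nonneg (u n y - (u n x - u n y))]
    have hexpand : R ^ 2 * (|A x| + C0) = R^2*|A x| + R^2*C0 := by ring
    show u n x ^ 2 ≤ 4*R^2 + 2*R^2*C0 + 2*R^2*|A x|
    nlinarith
  -- subsequence converging at all rationals of the interval
  have hmem : ∀ n, (fun q : {q : ℚ // (q : ℝ) ∈ Ioo (-1:ℝ) 1} => u n (q.1 : ℝ)) ∈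
      Set.pi (univ : Set {q : ℚ // (q : ℝ) ∈ Ioo (-1:ℝ) 1})
        (fun q => Icc (-(Real.sqrt (G (q.1 : ℝ)))) (Real.sqrt (G (q.1 : ℝ)))) := by
    intro n q _
    have h2 := hpt n (q.1 : ℝ) q.2
    have h3 : |u n (q.1 : ℝ)| ≤ Real.sqrt (G (q.1 : ℝ)) := by
      rw [← Real.sqrt_sq_eq_abs]
      exact Real.sqrt_le_sqrt h2
    exact Set.mem_Icc.2 (abs_le.1 h3)
  obtain ⟨L, -, φ, hφ, hLconv⟩ :=
    (isCompact_univ_pi (fun q : {q : ℚ // (q : ℝ) ∈ Ioo (-1:ℝ) 1} =>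
      isCompact_Icc)).tendsto_subseq hmem
  have hqconv : ∀ q : {q : ℚ // (q : ℝ) ∈ Ioo (-1:ℝ) 1},
      Tendsto (fun n => u (φ n) (q.1 : ℝ)) atTop (𝓝 (L q)) := by
    intro q
    have := tendsto_pi_nhds.1 hLconv q
    simpa [Function.comp] using this
  -- Cauchy at every point
  have hcauchy : ∀ x ∈ Ioo (-1:ℝ) 1, CauchySeq fun n => u (φ n) x := by
    intro x hx
    rw [Metric.cauchySeq_iff]
    intro ε hε
    have h1 : 0 < x + 1 := by linarith [hx.1]
    have h2 : 0 < 1 - x := by linarith [hx.2]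
    have hδ0pos : 0 < min (x + 1) (1 - x) / 2 := by positivity
    set δ0 := min (x + 1) (1 - x) / 2 with hδ0
    have hδ0a : δ0 ≤ (x + 1) / 2 := by
      rw [hδ0]
      gcongr
      exact min_le_left _ _
    have hδ0b : δ0 ≤ (1 - x) / 2 := by
      rw [hδ0]
      gcongr
      exact min_le_right _ _
    have hKsub : Icc (x - δ0) (x + δ0) ⊆ Ioo (-1:ℝ) 1 := by
      intro t ht
      constructor
      · have := ht.1; linarith
      · have := ht.2; linarith
    have hnK : (Icc (x - δ0) (x + δ0)).Nonempty := nonempty_Icc.2 (by linarith)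
    have hcontK : ContinuousOn (fun s => 1 / a s) (Icc (x - δ0) (x + δ0)) :=
      continuousOn_const.div (hacont.mono (hKsub.trans hIooIcc))
        (fun t ht => (hapos t (hKsub ht)).ne')
    obtain ⟨t1, ht1mem, ht1max⟩ := isCompact_Icc.exists_isMaxOn hnK hcontK
    set B := 1 / a t1 with hB
    have hBpos : 0 < B := one_div_pos.2 (hapos t1 (hKsub ht1mem))
    have hBR : 0 < B * R ^ 2 + 1 := by nlinarith [mul_pos hBpos (pow_pos hR 2)]
    set η := (ε ^ 2 / 32) / (B * R ^ 2 + 1) with hη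
    have hηpos : 0 < η := by positivity
    set δ := min δ0 η with hδdef
    have hδpos : 0 < δ := lt_min hδ0pos hηpos
    obtain ⟨q, hq1, hq2⟩ := exists_rat_btwn (show x - δ < x by linarith)
    have hδδ0 : δ ≤ δ0 := min_le_left _ _
    have hδη : δ ≤ η := min_le_right _ _
    have hqK : (q : ℝ) ∈ Icc (x - δ0) (x + δ0) := by
      constructor
      · linarith
      · linarith
    have hqIoo : (q : ℝ) ∈ Ioo (-1:ℝ) 1 := hKsub hqK
    have hAxq : A x - A (q : ℝ) ≤ B * δ := by
      rw [hAdiff (q : ℝ) x hqIoo hx]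
      have hi1 : (∫ s in (q:ℝ)..x, 1 / a s) ≤ ∫ _ in (q:ℝ)..x, B := by
        apply intervalIntegral.integral_mono_on hq2.le (hrec_int _ _ hqIoo hx)
          intervalIntegrable_const
        intro t ht
        have htK : t ∈ Icc (x - δ0) (x + δ0) := by
          constructor
          · have := ht.1; linarith
          · have := ht.2; linarith
        exact ht1max htK
      have hi2 : (∫ _ in (q:ℝ)..x, B) = B * (x - (q:ℝ)) := by
        rw [intervalIntegral.integral_const, smul_eq_mul]; ring
      have hi3 : B * (x - (q:ℝ)) ≤ B * δ :=
        mul_le_mul_of_nonneg_left (by linarith) hBpos.le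
      linarith
    have hABsmall : R ^ 2 * (A x - A (q:ℝ)) ≤ ε ^ 2 / 32 := by
      have h3 : R ^ 2 * (A x - A (q:ℝ)) ≤ R ^ 2 * (B * δ) :=
        mul_le_mul_of_nonneg_left hAxq (sq_nonneg R)
      have h4 : R ^ 2 * (B * δ) ≤ R ^ 2 * (B * η) := by
        have h5 := mul_le_mul_of_nonneg_left hδη hBpos.le
        exact mul_le_mul_of_nonneg_left h5 (sq_nonneg R)
      have h5 : R ^ 2 * (B * η) = (ε ^ 2 / 32) * ((B * R ^ 2) / (B * R ^ 2 + 1)) := by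
        rw [hη]; field_simp
      have hfrac : (B * R ^ 2) / (B * R ^ 2 + 1) ≤ 1 :=
        div_le_one_of_le₀ (by linarith) (by linarith)
      have h6 : (ε ^ 2 / 32) * ((B * R ^ 2) / (B * R ^ 2 + 1)) ≤ (ε ^ 2 / 32) * 1 :=
        mul_le_mul_of_nonneg_left hfrac (by positivity)
      linarith
    have habs : ∀ m, |u (φ m) x - u (φ m) (q:ℝ)| ≤ ε / 4 := by
      intro m
      have h7 : (u (φ m) x - u (φ m) (q:ℝ)) ^ 2 ≤ (ε / 4) ^ 2 := by
        have hk := hkey (φ m) (q:ℝ) x hqIoo hx hq2.le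
        have h8 : ε ^ 2 / 32 ≤ (ε / 4) ^ 2 := by nlinarith [sq_nonneg ε]
        linarith
      calc |u (φ m) x - u (φ m) (q:ℝ)|
          = Real.sqrt ((u (φ m) x - u (φ m) (q:ℝ)) ^ 2) := (Real.sqrt_sq_eq_abs _).symm
        _ ≤ Real.sqrt ((ε / 4) ^ 2) := Real.sqrt_le_sqrt h7
        _ = ε / 4 := Real.sqrt_sq (by positivity)
    have hconvq := hqconv ⟨q, hqIoo⟩
    rw [Metric.tendsto_atTop] at hconvq
    obtain ⟨N, hN⟩ := hconvq (ε / 4) (by positivity)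
    refine ⟨N, fun m hm k hk => ?_⟩
    have d1 := habs m
    have d2 := habs k
    have d3 := hN m hm
    have d4 := hN k hk
    rw [Real.dist_eq] at d3 d4 ⊢
    set Lq := L ⟨q, hqIoo⟩
    have t1' : |u (φ m) x - u (φ k) x| ≤
        |u (φ m) x - u (φ m) (q:ℝ)| + |u (φ m) (q:ℝ) - u (φ k) (q:ℝ)|
          + |u (φ k) (q:ℝ) - u (φ k) x| := by
      calc |u (φ m) x - u (φ k) x|
          ≤ |u (φ m) x - u (φ k) (q:ℝ)| + |u (φ k) (q:ℝ) - u (φ k) x| := abs_sub_le _ _ _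
        _ ≤ (|u (φ m) x - u (φ m) (q:ℝ)| + |u (φ m) (q:ℝ) - u (φ k) (q:ℝ)|)
            + |u (φ k) (q:ℝ) - u (φ k) x| := by
              gcongr
              exact abs_sub_le _ _ _
    have t2' : |u (φ m) (q:ℝ) - u (φ k) (q:ℝ)| ≤
        |u (φ m) (q:ℝ) - Lq| + |Lq - u (φ k) (q:ℝ)| := abs_sub_le _ _ _
    have t3' : |Lq - u (φ k) (q:ℝ)| = |u (φ k) (q:ℝ) - Lq| := abs_sub_comm _ _
    have e1 : |u (φ m) x - u (φ m) (q:ℝ)| = |u (φ m) x - u (φ m) (q:ℝ)| := rfl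
    have e2 : |u (φ k) (q:ℝ) - u (φ k) x| = |u (φ k) x - u (φ k) (q:ℝ)| := abs_sub_comm _ _
    linarith
  -- pointwise limit
  have hselect : ∀ x : ℝ, x ∈ Ioo (-1:ℝ) 1 →
      ∃ l : ℝ, Tendsto (fun n => u (φ n) x) atTop (𝓝 l) :=
    fun x hx => cauchySeq_tendsto_of_complete (hcauchy x hx)
  choose! v hvt using hselect
  have hvmeas : AEStronglyMeasurable v (volume.restrict (Ioo (-1:ℝ) 1)) := by
    apply aestronglyMeasurable_of_tendsto_ae atTop
      (fun n => (huL2 (φ n)).aestronglyMeasurable)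
    filter_upwards [ae_restrict_mem measurableSet_Ioo] with x hx
    exact hvt x hx
  have hvbd : ∀ x ∈ Ioo (-1:ℝ) 1, v x ^ 2 ≤ G x := by
    intro x hx
    have h1 : Tendsto (fun n => u (φ n) x ^ 2) atTop (𝓝 (v x ^ 2)) := (hvt x hx).pow 2
    exact le_of_tendsto h1 (Eventually.of_forall fun n => hpt (φ n) x hx)
  refine ⟨φ, hφ, v, ?_, ?_⟩
  · refine (memLp_two_iff_integrable_sq hvmeas).2 ?_
    refine Integrable.mono' hGint (hvmeas.pow 2) ?_
    filter_upwards [ae_restrict_mem measurableSet_Ioo] with x hx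
    rw [Real.norm_eq_abs, abs_of_nonneg (sq_nonneg _)]
    exact hvbd x hx
  · have hdct : Tendsto (fun n => ∫ x in Ioo (-1:ℝ) 1, (u (φ n) x - v x) ^ 2) atTop
        (𝓝 (∫ _ in Ioo (-1:ℝ) 1, (0:ℝ))) := by
      apply tendsto_integral_of_dominated_convergence (fun x => 4 * G x)
      · intro n
        exact ((huL2 (φ n)).aestronglyMeasurable.sub hvmeas).pow 2
      · exact hGint.const_mul 4
      · intro n
        filter_upwards [ae_restrict_mem measurableSet_Ioo] with x hx
        rw [Real.norm_eq_abs, abs_of_nonneg (sq_nonneg _)]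
        nlinarith [hpt (φ n) x hx, hvbd x hx, sq_nonneg (u (φ n) x + v x)]
      · filter_upwards [ae_restrict_mem measurableSet_Ioo] with x hx
        have h1 : Tendsto (fun n => u (φ n) x - v x) atTop (𝓝 (v x - v x)) :=
          (hvt x hx).sub tendsto_const_nhds
        rw [sub_self] at h1
        have h2 := h1.pow 2
        simpa using h2
    simpa using hdct
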